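/- Let I = [a, b] with a < b, let q ∈ (0, ∞), let (n_i)_{i≥1} and (r_i)_{i≥1} be arbitrary sequences of natural numbers, and let (ε_i)_{i≥1} be a sequence of real numbers with ε_i → 0. Then there exists a function f ∈ L^q(I) such that for every i ≥ 1, inf_{s ∈ 𝓢_{n_i, r_i}(I) ∩ C(I)} (∫_I |f(t) − s(t)|^q dt)^{1/q} ≥ ε_i. -/

import Mathlib

open MeasureTheory

/-- `SplineSet n r a b` is the set `𝓢_{n,r}([a,b])` of polynomial splines of degree `≤ n` with
`r` free knots on `[a, b]`: there are points `a = t_0 ≤ t_1 ≤ … ≤ t_r ≤ t_{r+1} = b` such that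
on each `[t_j, t_{j+1}]` the function coincides with a polynomial of degree `≤ n`. -/
def SplineSet (n r : ℕ) (a b : ℝ) : Set (ℝ → ℝ) :=
  { s | ∃ t : Fin (r + 2) → ℝ, Monotone t ∧ t 0 = a ∧ t (Fin.last (r + 1)) = b ∧
        ∀ j : Fin (r + 1), ∃ p : Polynomial ℝ, p.natDegree ≤ n ∧
          ∀ x ∈ Set.Icc (t j.castSucc) (t j.succ), s x = p.eval x }

open Set ENNReal


lemma exists_piece {r : ℕ} {t : Fin (r + 2) → ℝ} (ht : Monotone t) {y : ℝ}
    (hy1 : t 0 ≤ y) (hy2 : y ≤ t (Fin.last (r + 1))) :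
    ∃ v : Fin (r + 1), t v.castSucc ≤ y ∧ y ≤ t v.succ := by
  classical
  set S : Finset (Fin (r + 2)) := Finset.univ.filter (fun v => t v ≤ y) with hS
  have h0S : (0 : Fin (r+2)) ∈ S := by simp [hS, hy1]
  have hSne : S.Nonempty := ⟨0, h0S⟩
  set j := S.max' hSne with hj
  have hjS : j ∈ S := S.max'_mem hSne
  have hjy : t j ≤ y := by simpa [hS] using hjS
  by_cases hlt : (j : ℕ) < r + 1
  · refine ⟨⟨(j : ℕ), hlt⟩, ?_, ?_⟩
    · have : (⟨(j : ℕ), hlt⟩ : Fin (r+1)).castSucc = j := by ext; simp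
      rw [this]; exact hjy
    · by_contra hcon
      push_neg at hcon
      have hmem : (⟨(j : ℕ), hlt⟩ : Fin (r+1)).succ ∈ S := by
        simp [hS]; exact hcon.le
      have := S.le_max' _ hmem
      rw [← hj] at this
      have : ((⟨(j : ℕ), hlt⟩ : Fin (r+1)).succ : ℕ) ≤ (j : ℕ) := this
      simp at this
  · have hjlast : j = Fin.last (r + 1) := by
      have : (j : ℕ) = r + 1 := le_antisymm (Nat.lt_succ_iff.mp j.isLt) (not_lt.mp hlt)
      ext; simp [this]
    refine ⟨Fin.last r, ?_, ?_⟩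
    · calc t (Fin.last r).castSucc ≤ t (Fin.last (r+1)) := ht (by simp [Fin.le_def])
        _ = t j := by rw [hjlast]
        _ ≤ y := hjy
    · have : (Fin.last r).succ = Fin.last (r + 1) := by ext; simp
      rw [this]; exact hy2

lemma alternation {a b : ℝ} {n r : ℕ} {s : ℝ → ℝ}
    (hs : s ∈ SplineSet n r a b) (hcont : ContinuousOn s (Set.Icc a b))
    {m : ℕ} {u : ℕ → ℝ}
    (hmem : ∀ j, j < m → u j ∈ Set.Icc a b)
    (hmono : ∀ j j', j < j' → j' < m → u j < u j')
    (hsign : ∀ j, j < m → 0 < (if Even j then s (u j) else -s (u j))) :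
    m ≤ (r + 1) * (n + 2) := by
  classical
  rcases le_or_gt m 2 with hm2 | hm2
  · calc m ≤ 2 := hm2
      _ ≤ (r+1)*(n+2) := by nlinarith
  obtain ⟨t, ht, ht0, htl, hp⟩ := hs
  -- zeros between consecutive points
  have hzex : ∀ j, ∃ z, j + 1 < m → z ∈ Ioo (u j) (u (j+1)) ∧ s z = 0 := by
    intro j
    by_cases hj : j + 1 < m
    · have hj' : j < m := by omega
      have hults : u j < u (j+1) := hmono j (j+1) (by omega) hj
      have hsub : Icc (u j) (u (j+1)) ⊆ Icc a b := by
        apply Icc_subset_Icc (hmem j hj').1 (hmem (j+1) hj).2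
      have hcont' : ContinuousOn s (Icc (u j) (u (j+1))) := hcont.mono hsub
      have hsj := hsign j hj'
      have hsj1 := hsign (j+1) hj
      rcases Nat.even_or_odd j with hev | hod
      · -- s (u j) > 0, s (u (j+1)) < 0
        have h1 : 0 < s (u j) := by simpa [hev] using hsj
        have h2 : s (u (j+1)) < 0 := by
          have : ¬ Even (j+1) := by simp [Nat.even_add_one, hev]
          have := hsj1; rw [if_neg ‹¬ Even (j+1)›] at this; linarith
        have := intermediate_value_Ioo' hults.le hcont' (a := u j) (b := u (j+1))
        have h0 : (0:ℝ) ∈ Ioo (s (u (j+1))) (s (u j)) := ⟨h2, h1⟩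
        obtain ⟨z, hz, hz0⟩ := this h0
        exact ⟨z, fun _ => ⟨hz, hz0⟩⟩
      · have hnev : ¬ Even j := Nat.not_even_iff_odd.mpr hod
        have h1 : s (u j) < 0 := by
          have := hsj; rw [if_neg hnev] at this; linarith
        have h2 : 0 < s (u (j+1)) := by
          have : Even (j+1) := Nat.even_add_one.mpr hnev
          simpa [this] using hsj1
        have := intermediate_value_Ioo hults.le hcont' (a := u j) (b := u (j+1))
        obtain ⟨z, hz, hz0⟩ := this ⟨h1, h2⟩
        exact ⟨z, fun _ => ⟨hz, hz0⟩⟩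
    · exact ⟨0, fun h => absurd h hj⟩
  choose z hz using hzex
  -- piece assignment for the zeros
  have hφex : ∀ j, ∃ v : Fin (r+1), j + 1 < m → t v.castSucc ≤ z j ∧ z j ≤ t v.succ := by
    intro j
    by_cases hj : j + 1 < m
    · have hj' : j < m := by omega
      have hzj := hz j hj
      have hza : a ≤ z j := le_trans (hmem j hj').1 hzj.1.1.le
      have hzb : z j ≤ b := le_trans hzj.1.2.le (hmem (j+1) hj).2
      obtain ⟨v, hv1, hv2⟩ := exists_piece (y := z j) ht (by rw [ht0]; exact hza) (by rw [htl]; exact hzb)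
      exact ⟨v, fun _ => ⟨hv1, hv2⟩⟩
    · exact ⟨0, fun h => absurd h hj⟩
  choose φ hφ using hφex
  -- if j < j' both in range (m-1), then u (j+1) is between z j and z j'
  have hkey : ∀ j j', j < j' → j' + 1 < m → z j < u (j+1) ∧ u (j+1) < z j' := by
    intro j j' hjj hj'
    have hj : j + 1 < m := by omega
    constructor
    · exact (hz j hj).1.2
    · rcases eq_or_lt_of_le (Nat.succ_le_of_lt hjj) with heq | hlt
      · subst heq; exact (hz _ hj').1.1
      · exact lt_trans (hmono (j+1) j' hlt (by omega)) (hz j' hj').1.1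
  -- fiber bound
  have hfiber : ∀ v ∈ (Finset.range (m-1)).image φ,
      ((Finset.range (m-1)).filter (fun j => φ j = v)).card ≤ max n 1 := by
    intro v _
    obtain ⟨p, hdeg, heval⟩ := hp v
    set F := (Finset.range (m-1)).filter (fun j => φ j = v) with hF
    have hFprop : ∀ j ∈ F, j + 1 < m ∧ φ j = v := by
      intro j hj
      rw [hF, Finset.mem_filter, Finset.mem_range] at hj
      exact ⟨by omega, hj.2⟩
    by_cases hp0 : p = 0
    · have : F.card ≤ 1 := by
        rw [Finset.card_le_one]
        intro j hj j' hj'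
        by_contra hne
        wlog hlt : j < j' generalizing j j'
        · exact this j' hj' j hj (Ne.symm hne) (by omega)
        have h1 := hFprop j hj
        have h2 := hFprop j' hj'
        have hu : u (j+1) ∈ Icc (t v.castSucc) (t v.succ) := by
          constructor
          · have := (hφ j h1.1); rw [h1.2] at this
            exact le_trans this.1 (hkey j j' hlt h2.1).1.le
          · have := (hφ j' h2.1); rw [h2.2] at this
            exact le_trans (hkey j j' hlt h2.1).2.le this.2
        have hz0 : s (u (j+1)) = 0 := by rw [heval _ hu, hp0]; simp
        have := hsign (j+1) (by omega)
        rcases Nat.even_or_odd (j+1) with h | h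
        · rw [if_pos h, hz0] at this; exact lt_irrefl 0 this
        · rw [if_neg (Nat.not_even_iff_odd.mpr h), hz0] at this; simp at this
      omega
    · have hinj : Set.InjOn z F := by
        intro j hj j' hj' heq
        by_contra hne
        wlog hlt : j < j' generalizing j j'
        · exact this hj' hj heq.symm (Ne.symm hne) (by omega)
        have h2 := hFprop j' hj'
        have hk := hkey j j' hlt h2.1
        linarith [hk.1, hk.2, heq ▸ hk.1]
      have hmaps : ∀ j ∈ F, z j ∈ p.roots.toFinset := by
        intro j hj
        have h1 := hFprop j hj
        have hzj := hz j h1.1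
        have hzin : z j ∈ Icc (t v.castSucc) (t v.succ) := by
          have := hφ j h1.1; rw [h1.2] at this; exact ⟨this.1, this.2⟩
        rw [Multiset.mem_toFinset, Polynomial.mem_roots hp0]
        rw [Polynomial.IsRoot, ← heval _ hzin]
        exact hzj.2
      have := Finset.card_le_card_of_injOn z hmaps hinj
      calc F.card ≤ p.roots.toFinset.card := this
        _ ≤ Multiset.card p.roots := Multiset.toFinset_card_le _
        _ ≤ p.natDegree := p.card_roots'
        _ ≤ n := hdeg
        _ ≤ max n 1 := le_max_left _ _
  have hcount := Finset.card_le_mul_card_image (f := φ) (Finset.range (m-1)) (max n 1) hfiber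
  rw [Finset.card_range] at hcount
  have himg : ((Finset.range (m-1)).image φ).card ≤ r + 1 := by
    calc ((Finset.range (m-1)).image φ).card ≤ Finset.univ.card := Finset.card_le_univ _
      _ = r + 1 := by simp
  have : m - 1 ≤ (max n 1) * (r + 1) := le_trans hcount (Nat.mul_le_mul_left _ himg)
  have hmax : max n 1 ≤ n + 1 := by omega
  calc m = (m - 1) + 1 := by omega
    _ ≤ (max n 1) * (r+1) + 1 := by omega
    _ ≤ (n+1)*(r+1) + 1 := by
        have := Nat.mul_le_mul_right (r+1) hmax; omega
    _ ≤ (r+1)*(n+2) := by nlinarith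


noncomputable section SplineAux

/-- Constant dominating `(max (ε i) 0) ^ q`. -/
def splC (q : ℝ) (ε : ℕ → ℝ) : ℝ := (max (sSup (Set.range ε)) 1) ^ q

/-- Indices whose `ε`-level lives at scale `k`. -/
def splband (q : ℝ) (ε : ℕ → ℝ) (k : ℕ) : Set ℕ :=
  {i | splC q ε / 2 ^ (k + 1) < (max (ε i) 0) ^ q}

def splA (q : ℝ) (ε : ℕ → ℝ) (n r : ℕ → ℕ) (k : ℕ) : ℕ :=
  1 + sSup ((fun i => (r i + 1) * (n i + 2)) '' splband q ε k)

def splN (q : ℝ) (ε : ℕ → ℝ) (n r : ℕ → ℕ) (k : ℕ) : ℕ := 4 * splA q ε n r k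

def spld (a b : ℝ) (k : ℕ) : ℝ := b - (b - a) / 2 ^ k

def splw (a b q : ℝ) (ε : ℕ → ℝ) (n r : ℕ → ℕ) (k : ℕ) : ℝ :=
  ((b - a) / 2 ^ (k + 1)) / splN q ε n r k

def splM (a b q : ℝ) (ε : ℕ → ℝ) : ℝ := (8 * splC q ε / (b - a)) ^ (1 / q)

def splpiece (a b q : ℝ) (ε : ℕ → ℝ) (n r : ℕ → ℕ) (k j : ℕ) : Set ℝ :=
  Ico (spld a b k + j * splw a b q ε n r k) (spld a b k + (j + 1) * splw a b q ε n r k)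

def splEp (a b q : ℝ) (ε : ℕ → ℝ) (n r : ℕ → ℕ) : Set ℝ :=
  ⋃ k, ⋃ j, ⋃ (_ : j < splN q ε n r k ∧ Even j), splpiece a b q ε n r k j

def splEm (a b q : ℝ) (ε : ℕ → ℝ) (n r : ℕ → ℕ) : Set ℝ :=
  ⋃ k, ⋃ j, ⋃ (_ : j < splN q ε n r k ∧ ¬ Even j), splpiece a b q ε n r k j

def splf (a b q : ℝ) (ε : ℕ → ℝ) (n r : ℕ → ℕ) : ℝ → ℝ := fun x =>
  (splEp a b q ε n r).indicator (fun _ => splM a b q ε) x -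
    (splEm a b q ε n r).indicator (fun _ => splM a b q ε) x

end SplineAux

section SplineLemmas

variable {a b q : ℝ} {ε : ℕ → ℝ} {n r : ℕ → ℕ}

lemma splC_one_le (hq : 0 < q) : 1 ≤ splC q ε :=
  Real.one_le_rpow (le_max_right _ _) hq.le

lemma splC_pos (hq : 0 < q) : 0 < splC q ε := lt_of_lt_of_le one_pos (splC_one_le hq)

lemma splA_one_le (k : ℕ) : 1 ≤ splA q ε n r k := Nat.le_add_right 1 _

lemma splN_pos (k : ℕ) : 0 < splN q ε n r k := by
  have := splA_one_le (q := q) (ε := ε) (n := n) (r := r) (k := k); unfold splN; omega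

lemma splw_pos (hab : a < b) (k : ℕ) : 0 < splw a b q ε n r k := by
  unfold splw
  apply div_pos (div_pos (by linarith) (by positivity))
  exact_mod_cast splN_pos k

lemma spld_zero : spld a b 0 = a := by simp [spld]

lemma spld_succ (k : ℕ) : spld a b (k + 1) = spld a b k + (b - a) / 2 ^ (k + 1) := by
  unfold spld; field_simp; ring

lemma spld_lt_b (hab : a < b) (k : ℕ) : spld a b k < b := by
  unfold spld
  have : 0 < (b - a) / 2 ^ k := div_pos (by linarith) (by positivity)
  linarith

lemma a_le_spld (hab : a < b) (k : ℕ) : a ≤ spld a b k := by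
  unfold spld
  have h1 : (1 : ℝ) ≤ 2 ^ k := one_le_pow₀ (by norm_num)
  have h2 : (b - a) / 2 ^ k ≤ b - a := by
    rw [div_le_iff₀ (by positivity)]; nlinarith
  linarith

lemma spld_strictMono (hab : a < b) : StrictMono (spld a b (k := ·)) := by
  apply strictMono_nat_of_lt_succ
  intro k
  rw [spld_succ]
  have : 0 < (b - a) / 2 ^ (k + 1) := div_pos (by linarith) (by positivity)
  linarith

lemma splN_mul_splw (hab : a < b) (k : ℕ) :
    (splN q ε n r k : ℝ) * splw a b q ε n r k = (b - a) / 2 ^ (k + 1) := by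
  unfold splw
  have : (splN q ε n r k : ℝ) ≠ 0 := by exact_mod_cast (splN_pos k).ne'
  field_simp

lemma splpiece_subset (hab : a < b) {k j : ℕ} (hj : j < splN q ε n r k) :
    splpiece a b q ε n r k j ⊆ Ico (spld a b k) (spld a b (k + 1)) := by
  intro x hx
  obtain ⟨h1, h2⟩ := hx
  have hw := splw_pos (q := q) (ε := ε) (n := n) (r := r) hab k
  constructor
  · have : (0:ℝ) ≤ j * splw a b q ε n r k := by positivity
    linarith
  · have hle : ((j:ℝ) + 1) * splw a b q ε n r k ≤ (splN q ε n r k : ℝ) * splw a b q ε n r k := by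
      apply mul_le_mul_of_nonneg_right _ hw.le
      exact_mod_cast hj
    rw [splN_mul_splw hab] at hle
    rw [spld_succ]
    linarith

lemma splpiece_subset_Icc (hab : a < b) {k j : ℕ} (hj : j < splN q ε n r k) :
    splpiece a b q ε n r k j ⊆ Icc a b := by
  intro x hx
  have h := splpiece_subset hab hj hx
  exact ⟨le_trans (a_le_spld hab k) h.1, le_trans h.2.le (spld_lt_b hab (k+1)).le⟩

lemma splpiece_unique (hab : a < b) {k j k' j' : ℕ} (hj : j < splN q ε n r k)
    (hj' : j' < splN q ε n r k') {x : ℝ} (hx : x ∈ splpiece a b q ε n r k j)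
    (hx' : x ∈ splpiece a b q ε n r k' j') : k = k' ∧ j = j' := by
  have hd := spld_strictMono (a := a) (b := b) hab
  have hkk : k = k' := by
    by_contra hne
    rcases Nat.lt_or_ge k k' with h | h
    · have h1 := (splpiece_subset hab hj hx).2
      have h2 := (splpiece_subset hab hj' hx').1
      have : spld a b (k+1) ≤ spld a b k' := (spld_strictMono hab).monotone (by omega)
      linarith
    · have h : k' < k := by omega
      have h1 := (splpiece_subset hab hj' hx').2
      have h2 := (splpiece_subset hab hj hx).1
      have : spld a b (k'+1) ≤ spld a b k := (spld_strictMono hab).monotone (by omega)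
      linarith
  subst hkk
  refine ⟨rfl, ?_⟩
  by_contra hne
  have hw := splw_pos (q := q) (ε := ε) (n := n) (r := r) hab k
  rcases Nat.lt_or_ge j j' with h | h
  · have h1 := hx.2
    have h2 := hx'.1
    have : ((j:ℝ)+1) * splw a b q ε n r k ≤ (j':ℝ) * splw a b q ε n r k := by
      apply mul_le_mul_of_nonneg_right _ hw.le; exact_mod_cast h
    linarith
  · have h' : j' < j := by omega
    have h1 := hx'.2
    have h2 := hx.1
    have : ((j':ℝ)+1) * splw a b q ε n r k ≤ (j:ℝ) * splw a b q ε n r k := by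
      apply mul_le_mul_of_nonneg_right _ hw.le; exact_mod_cast h'
    linarith

lemma splpiece_lt (hab : a < b) {k j j' : ℕ} (hjj : j < j') {x y : ℝ}
    (hx : x ∈ splpiece a b q ε n r k j) (hy : y ∈ splpiece a b q ε n r k j') : x < y := by
  have hw := splw_pos (q := q) (ε := ε) (n := n) (r := r) hab k
  have h1 := hx.2
  have h2 := hy.1
  have : ((j:ℝ)+1) * splw a b q ε n r k ≤ (j':ℝ) * splw a b q ε n r k := by
    apply mul_le_mul_of_nonneg_right _ hw.le; exact_mod_cast hjj
  linarith

lemma splM_pos (hab : a < b) (hq : 0 < q) : 0 < splM a b q ε := by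
  have h1 := splC_pos (ε := ε) hq
  have hba : (0:ℝ) < b - a := by linarith
  exact Real.rpow_pos_of_pos (by positivity) _

lemma splM_rpow (hab : a < b) (hq : 0 < q) : splM a b q ε ^ q = 8 * splC q ε / (b - a) := by
  unfold splM
  have h1 := splC_pos (ε := ε) hq
  have hba : (0:ℝ) < b - a := by linarith
  rw [one_div, Real.rpow_inv_rpow (by positivity) hq.ne']

lemma splf_value (hab : a < b) {k j : ℕ} (hj : j < splN q ε n r k) {x : ℝ}
    (hx : x ∈ splpiece a b q ε n r k j) :
    splf a b q ε n r x = if Even j then splM a b q ε else -splM a b q ε := by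
  have hmem : ∀ {P : ℕ → ℕ → Prop}, (P k j) →
      x ∈ ⋃ k', ⋃ j', ⋃ (_ : j' < splN q ε n r k' ∧ P k' j'), splpiece a b q ε n r k' j' := by
    intro P hP
    exact Set.mem_iUnion.mpr ⟨k, Set.mem_iUnion.mpr ⟨j, Set.mem_iUnion.mpr ⟨⟨hj, hP⟩, hx⟩⟩⟩
  have hnot : ∀ {c : Prop} (hc : (Even j → ¬ c) ∧ (¬ Even j → c) → False),
      True := fun _ => trivial
  by_cases hev : Even j
  · have hEp : x ∈ splEp a b q ε n r := Set.mem_iUnion.mpr ⟨k, Set.mem_iUnion.mpr ⟨j, Set.mem_iUnion.mpr ⟨⟨hj, hev⟩, hx⟩⟩⟩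
    have hEm : x ∉ splEm a b q ε n r := by
      intro hc
      simp only [splEm, Set.mem_iUnion] at hc
      obtain ⟨k', j', ⟨hj', hodd⟩, hx'⟩ := hc
      obtain ⟨hk, hjj⟩ := splpiece_unique hab hj hj' hx hx'
      subst hk; subst hjj; exact hodd hev
    simp [splf, Set.indicator_of_mem hEp, Set.indicator_of_notMem hEm, hev]
  · have hEm : x ∈ splEm a b q ε n r := Set.mem_iUnion.mpr ⟨k, Set.mem_iUnion.mpr ⟨j, Set.mem_iUnion.mpr ⟨⟨hj, hev⟩, hx⟩⟩⟩
    have hEp : x ∉ splEp a b q ε n r := by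
      intro hc
      simp only [splEp, Set.mem_iUnion] at hc
      obtain ⟨k', j', ⟨hj', hev'⟩, hx'⟩ := hc
      obtain ⟨hk, hjj⟩ := splpiece_unique hab hj' hj hx' hx
      subst hk; subst hjj; exact hev hev'
    simp [splf, Set.indicator_of_mem hEm, Set.indicator_of_notMem hEp, hev]

lemma splf_bound (hab : a < b) (hq : 0 < q) (x : ℝ) : |splf a b q ε n r x| ≤ splM a b q ε := by
  have hM := (splM_pos (ε := ε) hab hq).le
  unfold splf
  by_cases h1 : x ∈ splEp a b q ε n r <;> by_cases h2 : x ∈ splEm a b q ε n r <;>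
    simp [Set.indicator_of_mem, Set.indicator_of_notMem, h1, h2, abs_le] <;>
    first
      | linarith
      | (constructor <;> linarith)

lemma splEp_measurable : MeasurableSet (splEp a b q ε n r) := by
  apply MeasurableSet.iUnion; intro k
  apply MeasurableSet.iUnion; intro j
  apply MeasurableSet.iUnion; intro _
  exact measurableSet_Ico

lemma splEm_measurable : MeasurableSet (splEm a b q ε n r) := by
  apply MeasurableSet.iUnion; intro k
  apply MeasurableSet.iUnion; intro j
  apply MeasurableSet.iUnion; intro _
  exact measurableSet_Ico

lemma splf_measurable : Measurable (splf a b q ε n r) := by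
  apply Measurable.sub
  · exact measurable_const.indicator splEp_measurable
  · exact measurable_const.indicator splEm_measurable

lemma splpiece_volume (hab : a < b) (k j : ℕ) :
    volume (splpiece a b q ε n r k j) = ENNReal.ofReal (splw a b q ε n r k) := by
  unfold splpiece
  rw [Real.volume_Ico]
  congr 1; ring

lemma splpiece_disjoint (hab : a < b) {k j k' j' : ℕ} (hj : j < splN q ε n r k)
    (hj' : j' < splN q ε n r k') (hne : ¬ (k = k' ∧ j = j')) :
    Disjoint (splpiece a b q ε n r k j) (splpiece a b q ε n r k' j') := by
  rw [Set.disjoint_left]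
  intro x hx hx'
  exact hne (splpiece_unique hab hj hj' hx hx')

lemma splband_finite (hq : 0 < q) (hε : Filter.Tendsto ε Filter.atTop (nhds 0)) (k : ℕ) :
    (splband q ε k).Finite := by
  have h1 : Filter.Tendsto (fun i => max (ε i) 0) Filter.atTop (nhds 0) := by
    have := hε.max (tendsto_const_nhds (x := (0:ℝ)))
    simpa using this
  have h2 : Filter.Tendsto (fun i => (max (ε i) 0) ^ q) Filter.atTop (nhds 0) := by
    have hc := (Real.continuousAt_rpow_const 0 q (Or.inr hq.le)).tendsto
    rw [Real.zero_rpow hq.ne'] at hc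
    exact hc.comp h1
  have hδ : 0 < splC q ε / 2 ^ (k + 1) := by
    have := splC_pos (ε := ε) hq; positivity
  have hev := h2.eventually_lt_const hδ
  rw [← Nat.cofinite_eq_atTop] at hev
  have hfin := Filter.eventually_cofinite.mp hev
  apply hfin.subset
  intro i hi
  simp only [splband, Set.mem_setOf_eq] at hi ⊢
  linarith

lemma splA_bound (hq : 0 < q) (hε : Filter.Tendsto ε Filter.atTop (nhds 0)) {k i : ℕ}
    (hi : i ∈ splband q ε k) : (r i + 1) * (n i + 2) ≤ splA q ε n r k := by
  have hfin := (splband_finite hq hε k).image (fun i => (r i + 1) * (n i + 2))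
  have := le_csSup hfin.bddAbove (Set.mem_image_of_mem _ hi)
  unfold splA; omega

lemma spl_scale (hq : 0 < q) (hε : Filter.Tendsto ε Filter.atTop (nhds 0)) {i : ℕ}
    (hi : 0 < ε i) :
    ∃ k, i ∈ splband q ε k ∧ (max (ε i) 0) ^ q ≤ splC q ε / 2 ^ k := by
  have hC := splC_pos (ε := ε) hq
  have hεq : 0 < (max (ε i) 0) ^ q := Real.rpow_pos_of_pos (by simp [hi]) _
  set v := (max (ε i) 0) ^ q with hv
  have hne : {k : ℕ | splC q ε / 2 ^ (k + 1) < v}.Nonempty := by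
    obtain ⟨m, hm⟩ := pow_unbounded_of_one_lt (splC q ε / v) (y := (2:ℝ)) one_lt_two
    refine ⟨m, ?_⟩
    have h2 : (0:ℝ) < 2 ^ (m+1) := by positivity
    rw [Set.mem_setOf_eq, div_lt_iff₀ h2]
    rw [div_lt_iff₀ hεq] at hm
    have : (2:ℝ)^m ≤ 2^(m+1) := by
      apply pow_le_pow_right₀ (by norm_num) (by omega)
    nlinarith
  set K := sInf {k : ℕ | splC q ε / 2 ^ (k + 1) < v} with hK
  have hmem : K ∈ {k : ℕ | splC q ε / 2 ^ (k + 1) < v} := Nat.sInf_mem hne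
  refine ⟨K, hmem, ?_⟩
  rcases Nat.eq_zero_or_pos K with h0 | hpos
  · rw [h0]
    simp only [pow_zero, div_one]
    have hB : ε i ≤ sSup (Set.range ε) := le_csSup hε.bddAbove_range ⟨i, rfl⟩
    have h1 : max (ε i) 0 ≤ max (sSup (Set.range ε)) 1 := by
      rcases le_total (ε i) 0 with h | h
      · simp [max_eq_right h]
      · have h2 : ε i ≤ max (sSup (Set.range ε)) 1 := le_trans hB (le_max_left _ _)
        have h3 : (0:ℝ) ≤ max (sSup (Set.range ε)) 1 := le_trans zero_le_one (le_max_right _ _)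
        exact max_le h2 h3
    calc v ≤ (max (sSup (Set.range ε)) 1) ^ q :=
          Real.rpow_le_rpow (le_max_right _ _) h1 hq.le
      _ = splC q ε := rfl
  · have hK1 : K - 1 < K := by omega
    have hnot := Nat.notMem_of_lt_sInf (s := {k : ℕ | splC q ε / 2 ^ (k + 1) < v}) (by rw [← hK]; exact hK1)
    rw [Set.mem_setOf_eq, not_lt] at hnot
    have : K - 1 + 1 = K := by omega
    rwa [this] at hnot

section MainEstimate
variable {a b q : ℝ} {ε : ℕ → ℝ} {n r : ℕ → ℕ}

lemma spl_main (hab : a < b) (hq : 0 < q) (hε : Filter.Tendsto ε Filter.atTop (nhds 0))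
    (i : ℕ) (s : ℝ → ℝ) (hs : s ∈ SplineSet (n i) (r i) a b)
    (hscont : ContinuousOn s (Set.Icc a b)) :
    ENNReal.ofReal (ε i) ≤
      eLpNorm (splf a b q ε n r - s) (ENNReal.ofReal q) (volume.restrict (Set.Icc a b)) := by
  classical
  rcases le_or_gt (ε i) 0 with hεi | hεi
  · rw [ENNReal.ofReal_of_nonpos hεi]; exact zero_le
  obtain ⟨k, hband, hscale⟩ := spl_scale hq hε hεi
  set A := splA q ε n r k with hA
  set Nk := splN q ε n r k with hNk
  set W := splw a b q ε n r k with hW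
  set M := splM a b q ε with hM
  have hMpos : 0 < M := splM_pos (ε := ε) hab hq
  have hWpos : 0 < W := splw_pos (q := q) (ε := ε) (n := n) (r := r) hab k
  have hNA : Nk = 4 * A := rfl
  -- good pieces
  set good : ℕ → Prop := fun j => ∃ x ∈ splpiece a b q ε n r k j,
    |splf a b q ε n r x - s x| < M with hgood
  -- sign extraction on good even/odd pieces
  have hsignpos : ∀ j, j < Nk → Even j → good j →
      ∃ x ∈ splpiece a b q ε n r k j, 0 < s x := by
    intro j hj hev ⟨x, hx, hlt⟩
    refine ⟨x, hx, ?_⟩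
    have := splf_value hab hj hx
    rw [if_pos hev] at this
    rw [this] at hlt
    have := abs_lt.mp hlt
    linarith [this.2]
  have hsignneg : ∀ j, j < Nk → ¬ Even j → good j →
      ∃ x ∈ splpiece a b q ε n r k j, s x < 0 := by
    intro j hj hev ⟨x, hx, hlt⟩
    refine ⟨x, hx, ?_⟩
    have := splf_value hab hj hx
    rw [if_neg hev] at this
    rw [this] at hlt
    have := abs_lt.mp hlt
    linarith [this.1]
  -- the set of good pairs
  set GP := (Finset.range (2 * A)).filter (fun l => good (2 * l) ∧ good (2 * l + 1)) with hGP
  have hGPlt : ∀ l ∈ GP, l < 2 * A ∧ good (2*l) ∧ good (2*l+1) := by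
    intro l hl
    rw [hGP, Finset.mem_filter, Finset.mem_range] at hl
    exact ⟨hl.1, hl.2⟩
  have hidx : ∀ l, l < 2 * A → 2 * l < Nk ∧ 2 * l + 1 < Nk := by
    intro l hl; rw [hNk]; unfold splN; rw [← hA]; omega
  -- choose witnesses
  have hYex : ∀ l, ∃ y, l ∈ GP → y ∈ splpiece a b q ε n r k (2*l) ∧ 0 < s y := by
    intro l
    by_cases hl : l ∈ GP
    · obtain ⟨hl1, hg, _⟩ := hGPlt l hl
      obtain ⟨y, hy1, hy2⟩ := hsignpos (2*l) (hidx l hl1).1 (even_two_mul l) hg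
      exact ⟨y, fun _ => ⟨hy1, hy2⟩⟩
    · exact ⟨0, fun h => absurd h hl⟩
  have hZex : ∀ l, ∃ z, l ∈ GP → z ∈ splpiece a b q ε n r k (2*l+1) ∧ s z < 0 := by
    intro l
    by_cases hl : l ∈ GP
    · obtain ⟨hl1, _, hg⟩ := hGPlt l hl
      obtain ⟨z, hz1, hz2⟩ := hsignneg (2*l+1) (hidx l hl1).2 (by simp [Nat.even_add_one, Nat.not_even_iff_odd, parity_simps]) hg
      exact ⟨z, fun _ => ⟨hz1, hz2⟩⟩
    · exact ⟨0, fun h => absurd h hl⟩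
  choose Y hY using hYex
  choose Z hZ using hZex
  -- the alternating sequence
  set g := GP.card with hg
  have hgcard : GP.card = g := rfl
  set e := GP.orderEmbOfFin hgcard with he
  set u : ℕ → ℝ := fun j => if h : j < 2 * g then
      (if Even j then Y (e ⟨j / 2, by omega⟩) else Z (e ⟨j / 2, by omega⟩)) else 0 with hu
  have hudef : ∀ j (h : j < 2 * g), u j = if Even j then Y (e ⟨j / 2, by omega⟩)
      else Z (e ⟨j / 2, by omega⟩) := by
    intro j h; rw [hu]; exact dif_pos h
  have hemem : ∀ (t : Fin g), (e t) ∈ GP := fun t => GP.orderEmbOfFin_mem hgcard t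
  have huprop : ∀ j (h : j < 2 * g),
      u j ∈ splpiece a b q ε n r k (2 * (e ⟨j / 2, by omega⟩) + j % 2) ∧
      (0 < if Even j then s (u j) else -s (u j)) := by
    intro j h
    have ht : j / 2 < g := by omega
    rcases Nat.even_or_odd j with hev | hod
    · have hmod : j % 2 = 0 := Nat.even_iff.mp hev
      have hval : u j = Y (e ⟨j / 2, ht⟩) := by rw [hudef j h, if_pos hev]
      have hYp := hY (e ⟨j / 2, ht⟩) (hemem _)
      constructor
      · rw [hval, hmod]
        simpa using hYp.1
      · rw [if_pos hev, hval]; exact hYp.2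
    · have hnev : ¬ Even j := Nat.not_even_iff_odd.mpr hod
      have hmod : j % 2 = 1 := Nat.odd_iff.mp hod
      have hval : u j = Z (e ⟨j / 2, ht⟩) := by rw [hudef j h, if_neg hnev]
      have hZp := hZ (e ⟨j / 2, ht⟩) (hemem _)
      constructor
      · rw [hval, hmod]; exact hZp.1
      · rw [if_neg hnev, hval]; linarith [hZp.2]
  have hindlt : ∀ j (h : j < 2 * g), 2 * (e ⟨j / 2, by omega⟩) + j % 2 < Nk := by
    intro j h
    have := (hGPlt _ (hemem ⟨j / 2, by omega⟩)).1
    rw [hNk]; unfold splN; rw [← hA]; omega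
  -- alternation bound
  have halt : 2 * g ≤ (r i + 1) * (n i + 2) := by
    apply alternation hs hscont
    · intro j hj
      exact splpiece_subset_Icc hab (hindlt j hj) (huprop j hj).1
    · intro j j' hjj hj'
      have hj : j < 2 * g := by omega
      apply splpiece_lt hab _ (huprop j hj).1 (huprop j' hj').1
      have h2 : j / 2 ≤ j' / 2 := by omega
      rcases eq_or_lt_of_le h2 with heq | hlt
      · have hfin : (⟨j / 2, by omega⟩ : Fin g) = ⟨j' / 2, by omega⟩ := by
          ext; exact heq
        rw [hfin]
        have : j % 2 < j' % 2 := by omega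
        omega
      · have : (e ⟨j / 2, by omega⟩ : ℕ) < (e ⟨j' / 2, by omega⟩ : ℕ) := by
          have := e.strictMono (show (⟨j / 2, by omega⟩ : Fin g) < ⟨j' / 2, by omega⟩ from hlt)
          exact_mod_cast this
        omega
    · intro j hj
      exact (huprop j hj).2
  have hgA : g ≤ A := by
    have h1 := splA_bound (n := n) (r := r) hq hε hband
    rw [← hA] at h1; omega
  -- bad pairs
  set BP := Finset.range (2 * A) \ GP with hBP
  have hGPsub : GP ⊆ Finset.range (2 * A) := by rw [hGP]; exact Finset.filter_subset _ _
  have hBPcard : A ≤ BP.card := by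
    rw [hBP, Finset.card_sdiff_of_subset hGPsub, Finset.card_range, ← hg]
    omega
  have hBPmem : ∀ l ∈ BP, l < 2 * A ∧ ¬ (good (2 * l) ∧ good (2 * l + 1)) := by
    intro l hl
    rw [hBP, Finset.mem_sdiff, Finset.mem_range] at hl
    refine ⟨hl.1, fun hc => hl.2 ?_⟩
    rw [hGP]
    exact Finset.mem_filter.mpr ⟨Finset.mem_range.mpr hl.1, hc⟩
  -- bad piece selector
  set σ : ℕ → ℕ := fun l => if good (2 * l) then 2 * l + 1 else 2 * l with hσ
  have hσrange : ∀ l, σ l = 2 * l ∨ σ l = 2 * l + 1 := by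
    intro l; rw [hσ]; by_cases h : good (2 * l) <;> simp [h]
  have hbadpt : ∀ jj, ¬ good jj → ∀ x ∈ splpiece a b q ε n r k jj,
      M ≤ |splf a b q ε n r x - s x| := by
    intro jj hng x hx
    by_contra hcon
    push_neg at hcon
    exact hng ⟨x, hx, hcon⟩
  have hσnotgood : ∀ l ∈ BP, ¬ good (σ l) := by
    intro l hl
    have hng := (hBPmem l hl).2
    by_cases h : good (2 * l)
    · have h1 : σ l = 2 * l + 1 := by rw [hσ]; simp [h]
      rw [h1]; exact fun hc => hng ⟨h, hc⟩
    · have h1 : σ l = 2 * l := by rw [hσ]; simp [h]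
      rw [h1]; exact h
  have hσbad : ∀ l ∈ BP, ∀ x ∈ splpiece a b q ε n r k (σ l),
      M ≤ |splf a b q ε n r x - s x| :=
    fun l hl => hbadpt (σ l) (hσnotgood l hl)
  have hσlt : ∀ l ∈ BP, σ l < Nk := by
    intro l hl
    have hlt := (hBPmem l hl).1
    rcases hσrange l with h | h <;> rw [h] <;> rw [hNk] <;> unfold splN <;> rw [← hA] <;> omega
  -- the bad set
  set U := ⋃ l ∈ BP, splpiece a b q ε n r k (σ l) with hU
  have hUmeas : MeasurableSet U := by
    rw [hU]
    exact (BP : Finset ℕ).measurableSet_biUnion (fun l _ => measurableSet_Ico)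
  have hUsub : U ⊆ Set.Icc a b := by
    rw [hU]
    apply Set.iUnion₂_subset
    intro l hl
    exact splpiece_subset_Icc hab (hσlt l hl)
  have hdisj : (BP : Set ℕ).PairwiseDisjoint (fun l => splpiece a b q ε n r k (σ l)) := by
    intro l hl l' hl' hne
    apply splpiece_disjoint hab (hσlt l (by exact_mod_cast hl)) (hσlt l' (by exact_mod_cast hl'))
    rintro ⟨-, hjj⟩
    rcases hσrange l with h | h <;> rcases hσrange l' with h' | h' <;> omega
  have hUvol : volume U = BP.card * ENNReal.ofReal W := by
    have h1 : volume U = ∑ l ∈ BP, volume (splpiece a b q ε n r k (σ l)) := by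
      rw [hU]
      exact measure_biUnion_finset hdisj (fun l _ => measurableSet_Ico)
    rw [h1, Finset.sum_congr rfl
      (fun l _ => splpiece_volume (q := q) (ε := ε) (n := n) (r := r) hab k (σ l)),
      Finset.sum_const, nsmul_eq_mul]
  -- lower bound on the lintegral
  set ν := volume.restrict (Set.Icc a b) with hν
  have hνU : ν U = BP.card * ENNReal.ofReal W := by
    rw [hν, Measure.restrict_apply hUmeas, Set.inter_eq_self_of_subset_left hUsub, hUvol]
  set F := splf a b q ε n r - s with hF
  have hpoint : ∀ x ∈ U, ENNReal.ofReal (M ^ q) ≤ (‖F x‖₊ : ℝ≥0∞) ^ q := by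
    intro x hx
    rw [hU] at hx
    simp only [Set.mem_iUnion] at hx
    obtain ⟨l, hl, hxl⟩ := hx
    have hMle := hσbad l hl x hxl
    have h1 : (‖F x‖₊ : ℝ≥0∞) = ENNReal.ofReal |F x| := Real.enorm_eq_ofReal_abs _
    have h2 : F x = splf a b q ε n r x - s x := rfl
    rw [← ENNReal.ofReal_rpow_of_pos hMpos, h1]
    apply ENNReal.rpow_le_rpow _ hq.le
    apply ENNReal.ofReal_le_ofReal
    rw [h2]; exact hMle
  have hlint : ENNReal.ofReal (M ^ q) * (BP.card * ENNReal.ofReal W) ≤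
      ∫⁻ x, (‖F x‖₊ : ℝ≥0∞) ^ q ∂ν := by
    calc ENNReal.ofReal (M ^ q) * (BP.card * ENNReal.ofReal W)
        = ENNReal.ofReal (M ^ q) * ν U := by rw [hνU]
      _ = ∫⁻ _ in U, ENNReal.ofReal (M ^ q) ∂ν := (setLIntegral_const U _).symm
      _ ≤ ∫⁻ x in U, (‖F x‖₊ : ℝ≥0∞) ^ q ∂ν := setLIntegral_mono' hUmeas hpoint
      _ ≤ ∫⁻ x, (‖F x‖₊ : ℝ≥0∞) ^ q ∂ν := setLIntegral_le_lintegral _ _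
  -- real-number computation
  have hAW : (A : ℝ) * W = (b - a) / 2 ^ (k + 1) / 4 := by
    have h4 : ((4 * A : ℕ) : ℝ) * W = (b - a) / 2 ^ (k + 1) := by
      rw [← hNA, hW, hNk]; exact splN_mul_splw hab k
    push_cast at h4
    linarith
  have hCq : M ^ q * ((A : ℝ) * W) = splC q ε / 2 ^ k := by
    rw [hAW, hM, splM_rpow hab hq]
    have hba : (b : ℝ) - a ≠ 0 := by linarith
    have h2 : (2:ℝ) ^ (k+1) = 2 ^ k * 2 := by ring
    field_simp [h2]
    ring
  have hεC : (ε i) ^ q ≤ M ^ q * ((A : ℝ) * W) := by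
    rw [hCq]
    have : max (ε i) 0 = ε i := max_eq_left hεi.le
    rw [this] at hscale
    exact hscale
  -- assemble
  have hp0 : (ENNReal.ofReal q) ≠ 0 := by
    simp [ENNReal.ofReal_pos.mpr hq, ne_of_gt]
  have hpT : (ENNReal.ofReal q) ≠ ⊤ := ENNReal.ofReal_ne_top
  rw [eLpNorm_eq_lintegral_rpow_enorm_toReal hp0 hpT, ENNReal.toReal_ofReal hq.le]
  have hmain : ENNReal.ofReal (ε i) ^ q ≤ ∫⁻ x, (‖F x‖₊ : ℝ≥0∞) ^ q ∂ν := by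
    rw [ENNReal.ofReal_rpow_of_pos hεi]
    refine le_trans ?_ hlint
    have hMq : (0:ℝ) ≤ M ^ q := Real.rpow_nonneg hMpos.le q
    rw [← ENNReal.ofReal_natCast BP.card,
      ← ENNReal.ofReal_mul (p := (BP.card : ℝ)) (Nat.cast_nonneg _),
      ← ENNReal.ofReal_mul hMq]
    apply ENNReal.ofReal_le_ofReal
    calc (ε i) ^ q ≤ M ^ q * ((A:ℝ) * W) := hεC
      _ ≤ M ^ q * ((BP.card : ℝ) * W) := by
          apply mul_le_mul_of_nonneg_left _ (Real.rpow_nonneg hMpos.le q)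
          apply mul_le_mul_of_nonneg_right _ hWpos.le
          exact_mod_cast hBPcard
  calc ENNReal.ofReal (ε i) = (ENNReal.ofReal (ε i) ^ q) ^ (1 / q) := by
        rw [← ENNReal.rpow_mul, mul_one_div_cancel hq.ne', ENNReal.rpow_one]
    _ ≤ (∫⁻ x, (‖F x‖₊ : ℝ≥0∞) ^ q ∂ν) ^ (1 / q) :=
        ENNReal.rpow_le_rpow hmain (by positivity)

end MainEstimate


/-- On `I = [a, b]` with `a < b`, for `q ∈ (0, ∞)`, any sequences `(n_i)`,
`(r_i)` of naturals and any null sequence `(ε_i)`, there is `f ∈ L^q(I)` with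
`inf_{s ∈ 𝓢_{n_i,r_i}(I) ∩ C(I)} ‖f - s‖_{L^q(I)} ≥ ε_i` for all `i ≥ 1`. -/
theorem spline_negative_Lq (a b : ℝ) (hab : a < b) (q : ℝ) (hq : 0 < q) (n r : ℕ → ℕ)
    (ε : ℕ → ℝ) (hε : Filter.Tendsto ε Filter.atTop (nhds 0)) :
    ∃ f : ℝ → ℝ, MemLp f (ENNReal.ofReal q) (volume.restrict (Set.Icc a b)) ∧
      ∀ i : ℕ, 1 ≤ i → ∀ s ∈ SplineSet (n i) (r i) a b, ContinuousOn s (Set.Icc a b) →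
        ENNReal.ofReal (ε i)
          ≤ eLpNorm (f - s) (ENNReal.ofReal q) (volume.restrict (Set.Icc a b)) := by
  classical
  haveI : IsFiniteMeasure (volume.restrict (Set.Icc a b)) :=
    ⟨by rw [Measure.restrict_apply_univ]; simp [Real.volume_Icc]⟩
  refine ⟨splf a b q ε n r, ?_, ?_⟩
  · apply MemLp.of_bound (splf_measurable.aestronglyMeasurable) (splM a b q ε)
    exact Filter.Eventually.of_forall (fun x => by
      rw [Real.norm_eq_abs]; exact splf_bound hab hq x)
  · intro i _ s hs hscont
    exact spl_main hab hq hε i s hs hscont
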